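/- arXiv:2111.11922 — 2 statements merged into one kernel-verified Lean document; each statement's English description precedes it below -/
import Mathlib

section
/- Let M be an n×n integer matrix with determinant ±1 that has a complex eigenvalue which is a root of unity (some root of its characteristic polynomial over ℂ is a root of unity). Then the induced automorphism of the n-torus (ℝ/ℤ)^n, sending x mod ℤ^n to Mx mod ℤ^n, is not ergodic with respect to the Haar probability measure; in particular it is not strong mixing. -/
open MeasureTheory Filter Matrix

/-- A measure-preserving map `T` on a measure space is strong mixing if for all
measurable sets `A, B` one has `μ (A ∩ T⁻ⁿ B) → μ A * μ B`. -/
def StrongMixing {X : Type*} [MeasurableSpace X] (μ : Measure X) (T : X → X) : Prop :=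
  ∀ A B : Set X, MeasurableSet A → MeasurableSet B →
    Tendsto (fun n : ℕ => μ (A ∩ (T^[n]) ⁻¹' B)) atTop (nhds (μ A * μ B))

/-- A map `T` on a measure space is ergodic if every measurable invariant set is null
or conull. -/
def IsErgodicMap {X : Type*} [MeasurableSpace X] (μ : Measure X) (T : X → X) : Prop :=
  ∀ U : Set X, MeasurableSet U → T ⁻¹' U = U → μ U = 0 ∨ μ Uᶜ = 0

/- ### Auxiliary lemmas -/

lemma aux_toCircle_zsmul (k : ℤ) (x : AddCircle (1:ℝ)) :
    AddCircle.toCircle (k • x) = (AddCircle.toCircle x) ^ k := by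
  induction k using Int.induction_on with
  | zero => simp
  | succ n ih => rw [add_smul, one_smul, AddCircle.toCircle_add, ih]; group
  | pred n ih =>
      rw [sub_smul, one_smul, sub_eq_add_neg, AddCircle.toCircle_add, ih]
      have h : AddCircle.toCircle (-x) = (AddCircle.toCircle x)⁻¹ := by
        rw [eq_inv_iff_mul_eq_one, ← AddCircle.toCircle_add]; simp
      rw [h]; group

lemma aux_toCircle_sum {ι : Type*} (s : Finset ι) (f : ι → AddCircle (1:ℝ)) :
    AddCircle.toCircle (∑ i ∈ s, f i) = ∏ i ∈ s, AddCircle.toCircle (f i) := by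
  classical
  induction s using Finset.cons_induction with
  | empty => simp
  | cons a s ha ih => rw [Finset.sum_cons, Finset.prod_cons, AddCircle.toCircle_add, ih]

/-- The character of the torus attached to an integer vector `k`. -/
noncomputable def torusChar {n : ℕ} (k : Fin n → ℤ) (x : Fin n → AddCircle (1:ℝ)) : Circle :=
  ∏ i, AddCircle.toCircle (k i • x i)

lemma torusChar_cont {n : ℕ} (k : Fin n → ℤ) :
    Continuous fun x : Fin n → AddCircle (1:ℝ) => ((torusChar k x : ℂ)).re := by
  apply Complex.continuous_re.comp
  apply continuous_subtype_val.comp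
  exact (show Continuous fun x => torusChar k x from continuous_finset_prod _ fun i _ =>
    AddCircle.continuous_toCircle.comp ((continuous_zsmul (k i)).comp (continuous_apply i)))

lemma torusChar_re_le_one {n : ℕ} (k : Fin n → ℤ) (x : Fin n → AddCircle (1:ℝ)) :
    ((torusChar k x : ℂ)).re ≤ 1 :=
  (Complex.re_le_norm _).trans (le_of_eq (Circle.norm_coe _))

lemma torusChar_apply_zero {n : ℕ} (k : Fin n → ℤ) :
    torusChar k (0 : Fin n → AddCircle (1:ℝ)) = 1 := by
  simp [torusChar]

lemma torusChar_comp {n : ℕ} (M : Matrix (Fin n) (Fin n) ℤ) (k : Fin n → ℤ)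
    (x : Fin n → AddCircle (1:ℝ)) :
    torusChar k (fun i => ∑ j, M i j • x j) = torusChar (Mᵀ *ᵥ k) x := by
  unfold torusChar
  have h1 : ∀ i, k i • (∑ j, M i j • x j) = ∑ j, (M i j * k i) • x j := by
    intro i
    rw [Finset.smul_sum]
    exact Finset.sum_congr rfl fun j _ => by rw [smul_smul, mul_comm]
  calc ∏ i, AddCircle.toCircle (k i • ∑ j, M i j • x j)
      = ∏ i, ∏ j, AddCircle.toCircle ((M i j * k i) • x j) := by
        refine Finset.prod_congr rfl fun i _ => ?_
        rw [h1 i, aux_toCircle_sum]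
    _ = ∏ j, ∏ i, AddCircle.toCircle ((M i j * k i) • x j) := Finset.prod_comm
    _ = ∏ j, AddCircle.toCircle ((Mᵀ *ᵥ k) j • x j) := by
        refine Finset.prod_congr rfl fun j _ => ?_
        rw [← aux_toCircle_sum, ← Finset.sum_smul]
        rfl

/-- Existence of a nonzero integer vector fixed by `(Mᵀ)^m`. -/
lemma aux_exists_fixed_vector {n : ℕ} (M : Matrix (Fin n) (Fin n) ℤ) (z : ℂ) (m : ℕ)
    (hz : (M.map (Int.cast : ℤ → ℂ)).charpoly.IsRoot z) (hzm : z ^ m = 1) :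
    ∃ v : Fin n → ℤ, v ≠ 0 ∧ (Mᵀ ^ m) *ᵥ v = v := by
  set B := M.map (Int.cast : ℤ → ℂ) with hB
  have hdet0 : (z • (1 : Matrix (Fin n) (Fin n) ℂ) - B).det = 0 := by
    have h := hz
    rw [Polynomial.IsRoot, Matrix.charpoly] at h
    have h2 : (Polynomial.evalRingHom z) (Matrix.charmatrix B).det
        = ((Matrix.charmatrix B).map (Polynomial.evalRingHom z)).det :=
      RingHom.map_det _ _
    have h3 : (Matrix.charmatrix B).map (Polynomial.evalRingHom z)
        = z • (1 : Matrix (Fin n) (Fin n) ℂ) - B := by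
      ext i j
      by_cases hij : i = j <;>
        simp [Matrix.map_apply, Matrix.charmatrix_apply, Matrix.sub_apply, Matrix.smul_apply,
          Matrix.one_apply, Matrix.diagonal_apply, hij]
    rw [h3] at h2
    rw [← h2]
    exact h
  obtain ⟨w, hw, hww⟩ := Matrix.exists_mulVec_eq_zero_iff.mpr hdet0
  have hBw : B *ᵥ w = z • w := by
    rw [sub_mulVec, smul_mulVec, one_mulVec, sub_eq_zero] at hww
    exact hww.symm
  have hpow : ∀ j : ℕ, (B ^ j) *ᵥ w = z ^ j • w := by
    intro j
    induction j with
    | zero => simp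
    | succ j ih =>
        rw [pow_succ', ← Matrix.mulVec_mulVec, ih, Matrix.mulVec_smul, hBw, smul_smul, pow_succ]
  have h2 : (B ^ m - 1).det = 0 := by
    refine Matrix.exists_mulVec_eq_zero_iff.mp ⟨w, hw, ?_⟩
    rw [sub_mulVec, one_mulVec, hpow, hzm, one_smul, sub_self]
  have h3 : ((M ^ m - 1 : Matrix (Fin n) (Fin n) ℤ)).det = 0 := by
    have hmap : (M ^ m - 1 : Matrix (Fin n) (Fin n) ℤ).map (Int.cast : ℤ → ℂ) = B ^ m - 1 :=
      calc (M ^ m - 1 : Matrix (Fin n) (Fin n) ℤ).map (Int.cast : ℤ → ℂ)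
          = (Int.castRingHom ℂ).mapMatrix (M ^ m - 1) := rfl
        _ = ((Int.castRingHom ℂ).mapMatrix M) ^ m - 1 := by
            rw [map_sub, map_pow, _root_.map_one]
        _ = B ^ m - 1 := rfl
    have h4 : (((M ^ m - 1).det : ℤ) : ℂ) = ((M ^ m - 1).map (Int.cast : ℤ → ℂ)).det := by
      simpa using RingHom.map_det (Int.castRingHom ℂ) (M ^ m - 1)
    rw [hmap, h2] at h4
    exact_mod_cast h4
  have h5 : ((Mᵀ ^ m - 1 : Matrix (Fin n) (Fin n) ℤ)).det = 0 := by
    rw [← Matrix.transpose_pow, ← Matrix.transpose_one, ← Matrix.transpose_sub,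
      Matrix.det_transpose]
    exact h3
  obtain ⟨v, hv, hvv⟩ := Matrix.exists_mulVec_eq_zero_iff.mpr h5
  refine ⟨v, hv, ?_⟩
  rwa [sub_mulVec, one_mulVec, sub_eq_zero] at hvv

/-- if an `n × n` integer matrix `M` with determinant `±1` has a complex
eigenvalue which is a root of unity, then the induced automorphism of the torus
`(ℝ/ℤ)ⁿ`, `x ↦ M x`, is not ergodic with respect to the Haar probability measure;
in particular it is not strong mixing. -/
theorem toral_automorphism_root_of_unity_not_ergodic
    (n : ℕ) (M : Matrix (Fin n) (Fin n) ℤ)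
    (hdet : M.det = 1 ∨ M.det = -1)
    (hM : ∃ z : ℂ, (M.map (Int.cast : ℤ → ℂ)).charpoly.IsRoot z ∧
      ∃ m : ℕ, 1 ≤ m ∧ z ^ m = 1) :
    ¬ IsErgodicMap volume
        (fun x : Fin n → AddCircle (1 : ℝ) => fun i => ∑ j, M i j • x j) ∧
    ¬ StrongMixing volume
        (fun x : Fin n → AddCircle (1 : ℝ) => fun i => ∑ j, M i j • x j) := by
  obtain ⟨z, hz, m, hm1, hzm⟩ := hM
  obtain ⟨v, hv0, hvfix⟩ := aux_exists_fixed_vector M z m hz hzm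
  set T : (Fin n → AddCircle (1:ℝ)) → (Fin n → AddCircle (1:ℝ)) :=
    fun x => fun i => ∑ j, M i j • x j with hT
  -- the invariant continuous function
  set g : (Fin n → AddCircle (1:ℝ)) → ℝ :=
    fun x => ∑ j ∈ Finset.range m, ((torusChar ((Mᵀ ^ j) *ᵥ v) x : ℂ)).re with hg
  have hgcont : Continuous g := continuous_finset_sum _ fun j _ => torusChar_cont _
  have hginv : ∀ x, g (T x) = g x := by
    intro x
    have key : ∀ j : ℕ, ((torusChar ((Mᵀ ^ j) *ᵥ v) (T x) : ℂ)).re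
        = ((torusChar ((Mᵀ ^ (j+1)) *ᵥ v) x : ℂ)).re := by
      intro j
      rw [hT, torusChar_comp, Matrix.mulVec_mulVec, ← pow_succ']
    have hF0 : ((torusChar ((Mᵀ ^ m) *ᵥ v) x : ℂ)).re
        = ((torusChar ((Mᵀ ^ 0) *ᵥ v) x : ℂ)).re := by
      rw [hvfix, pow_zero, one_mulVec]
    calc g (T x) = ∑ j ∈ Finset.range m, ((torusChar ((Mᵀ ^ (j+1)) *ᵥ v) x : ℂ)).re := by
          rw [hg]; exact Finset.sum_congr rfl fun j _ => key j
      _ = g x := by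
          have h1 := Finset.sum_range_succ' (fun j => ((torusChar ((Mᵀ ^ j) *ᵥ v) x : ℂ)).re) m
          have h2 := Finset.sum_range_succ (fun j => ((torusChar ((Mᵀ ^ j) *ᵥ v) x : ℂ)).re) m
          rw [hg]
          rw [h2] at h1
          linarith [h1, hF0]
  have hg0 : g 0 = m := by
    rw [hg]
    simp [torusChar_apply_zero]
  -- a point where g is small
  obtain ⟨i₀, hvi₀⟩ := Function.ne_iff.mp hv0
  have hvi₀' : v i₀ ≠ 0 := by simpa using hvi₀
  have hvR : ((v i₀ : ℝ)) ≠ 0 := Int.cast_ne_zero.mpr hvi₀'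
  set x₀ : Fin n → AddCircle (1:ℝ) :=
    fun i => if i = i₀ then (((2 * (v i₀ : ℝ))⁻¹ : ℝ) : AddCircle (1:ℝ)) else 0 with hx₀
  have hterm : ((torusChar v x₀ : ℂ)).re = -1 := by
    have hprod : torusChar v x₀ = AddCircle.toCircle (v i₀ • x₀ i₀) := by
      unfold torusChar
      refine Finset.prod_eq_single i₀ (fun i _ hi => ?_) (fun h => absurd (Finset.mem_univ i₀) h)
      rw [hx₀]
      simp [hi]
    have hsm : v i₀ • x₀ i₀ = (((2:ℝ)⁻¹ : ℝ) : AddCircle (1:ℝ)) := by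
      have hx : x₀ i₀ = (((2 * (v i₀ : ℝ))⁻¹ : ℝ) : AddCircle (1:ℝ)) := by simp [hx₀]
      rw [hx, ← AddCircle.coe_zsmul]
      congr 1
      rw [zsmul_eq_mul, _root_.mul_inv_rev, ← mul_assoc, mul_inv_cancel₀ hvR, one_mul]
    rw [hprod, hsm, AddCircle.toCircle_apply_mk]
    have : 2 * Real.pi / 1 * (2:ℝ)⁻¹ = Real.pi := by field_simp
    rw [this]
    rw [Circle.coe_exp]
    rw [show ((Real.pi : ℂ) * Complex.I) = Real.pi * Complex.I by norm_num]
    rw [Complex.exp_pi_mul_I]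
    norm_num
  have hglt : g x₀ < m := by
    have hbound : ∀ j ∈ Finset.range m, ((torusChar ((Mᵀ ^ j) *ᵥ v) x₀ : ℂ)).re ≤ 1 :=
      fun j _ => torusChar_re_le_one _ _
    have h0mem : 0 ∈ Finset.range m := Finset.mem_range.mpr hm1
    have hstrict : ((torusChar ((Mᵀ ^ 0) *ᵥ v) x₀ : ℂ)).re < 1 := by
      rw [pow_zero, one_mulVec, hterm]; norm_num
    have := Finset.sum_lt_sum (f := fun j => ((torusChar ((Mᵀ ^ j) *ᵥ v) x₀ : ℂ)).re)
      (g := fun _ => (1:ℝ)) hbound ⟨0, h0mem, hstrict⟩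
    rw [Finset.sum_const, Finset.card_range, nsmul_eq_mul, mul_one] at this
    exact this
  -- the invariant open set
  set a : ℝ := (g x₀ + m) / 2 with ha
  have hax : g x₀ < a := by rw [ha]; linarith
  have ham : a < m := by rw [ha]; linarith
  set U : Set (Fin n → AddCircle (1:ℝ)) := g ⁻¹' Set.Ioi a with hU
  have hUopen : IsOpen U := isOpen_Ioi.preimage hgcont
  have hUinv : T ⁻¹' U = U := by
    ext x
    simp only [hU, Set.mem_preimage, Set.mem_Ioi, hginv x]
  have hU0 : (0 : Fin n → AddCircle (1:ℝ)) ∈ U := by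
    rw [hU]; simpa [hg0] using ham
  have hμU : 0 < volume U := hUopen.measure_pos _ ⟨0, hU0⟩
  have hμUc : 0 < volume Uᶜ := by
    have hsub : g ⁻¹' Set.Iio a ⊆ Uᶜ := by
      intro x hx
      simp only [hU, Set.mem_compl_iff, Set.mem_preimage, Set.mem_Ioi, not_lt]
      exact le_of_lt hx
    refine lt_of_lt_of_le ?_ (measure_mono hsub)
    exact (isOpen_Iio.preimage hgcont).measure_pos _ ⟨x₀, hax⟩
  have hNotErg : ¬ IsErgodicMap volume T := by
    intro h
    rcases h U hUopen.measurableSet hUinv with h' | h'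
    · exact hμU.ne' h'
    · exact hμUc.ne' h'
  refine ⟨hNotErg, fun hSM => hNotErg ?_⟩
  -- strong mixing implies ergodic
  intro W hW hWinv
  have hiter : ∀ N : ℕ, (T^[N]) ⁻¹' W = W := by
    intro N
    induction N with
    | zero => simp
    | succ N ih =>
        rw [Function.iterate_succ, Set.preimage_comp, ih, hWinv]
  have htend := hSM W W hW hW
  simp only [hiter, Set.inter_self] at htend
  have heq : volume W * volume W = volume W :=
    tendsto_nhds_unique htend tendsto_const_nhds
  have huniv : volume (Set.univ : Set (Fin n → AddCircle (1:ℝ))) = 1 := by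
    rw [volume_pi, Measure.pi_univ]
    simp [AddCircle.measure_univ]
  by_cases h0 : volume W = 0
  · exact Or.inl h0
  · right
    have hle : volume W ≤ 1 := huniv ▸ measure_mono (Set.subset_univ W)
    have hne : volume W ≠ ⊤ := (lt_of_le_of_lt hle (by norm_num)).ne
    have h1 : volume W = 1 := by
      have hr : (volume W).toReal * (volume W).toReal = (volume W).toReal := by
        rw [← ENNReal.toReal_mul, heq]
      have hr0 : (volume W).toReal ≠ 0 := ENNReal.toReal_ne_zero.mpr ⟨h0, hne⟩
      have hr1 : (volume W).toReal = 1 :=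
        mul_left_cancel₀ hr0 (hr.trans (mul_one _).symm)
      rw [← ENNReal.ofReal_toReal hne, hr1, ENNReal.ofReal_one]
    rw [measure_compl hW hne, huniv, h1, tsub_self]
end

section
/- Let r ≥ 1 and s ≥ 1, let F be the free group on r generators, and let N = F/ℓ_s(F) be the free nilpotent group of rank r obtained by quotienting F by the s-th term of its lower central series (ℓ_0(F) = F, ℓ_{i+1}(F) = [F, ℓ_i(F)]). Then the homomorphism Aut(N) → Aut(N/[N,N]) induced by the abelianization map is surjective; that is, every automorphism of the abelianization of N lifts to an automorphism of N. -/
open Subgroup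
open scoped commutatorElement

section Aux

variable {G : Type*} [Group G]

/-- The lower central series maps onto the lower central series under a surjective hom. -/
lemma lcs_map_eq_aux {H : Type*} [Group H] (f : G →* H) (hf : Function.Surjective f) (n : ℕ) :
    Subgroup.map f (Subgroup.lowerCentralSeries (⊤ : Subgroup G) n) = Subgroup.lowerCentralSeries (⊤ : Subgroup H) n := by
  induction n with
  | zero => simpa using Subgroup.map_top_of_surjective f hf
  | succ n ih =>
    show Subgroup.map f ⁅Subgroup.lowerCentralSeries (⊤ : Subgroup G) n, ⊤⁆ = ⁅Subgroup.lowerCentralSeries (⊤ : Subgroup H) n, ⊤⁆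
    rw [Subgroup.map_commutator, ih, Subgroup.map_top_of_surjective f hf]

/-- `⁅ℓ₁, ℓᵢ⁆ ≤ ℓ_{i+2}`, via the three subgroups lemma in the quotient. -/
lemma commutator_lcs_one_le_aux (i : ℕ) :
    ⁅Subgroup.lowerCentralSeries (⊤ : Subgroup G) 1, Subgroup.lowerCentralSeries (⊤ : Subgroup G) i⁆ ≤ Subgroup.lowerCentralSeries (⊤ : Subgroup G) (i + 2) := by
  set L2 := Subgroup.lowerCentralSeries (⊤ : Subgroup G) (i + 2) with hL2
  let π : G →* G ⧸ L2 := QuotientGroup.mk' L2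
  have hπ : Function.Surjective π := QuotientGroup.mk'_surjective L2
  have hker : π.ker = L2 := QuotientGroup.ker_mk' L2
  have hmapbot : ∀ k, i + 2 ≤ k → Subgroup.map π (Subgroup.lowerCentralSeries (⊤ : Subgroup G) k) = ⊥ := by
    intro k hk
    rw [Subgroup.map_eq_bot_iff, hker]
    exact le_trans (Subgroup.lowerCentralSeries_antitone ⊤ hk) le_rfl
  have h1 : ⁅⁅Subgroup.map π (Subgroup.lowerCentralSeries (⊤ : Subgroup G) i), (⊤ : Subgroup (G ⧸ L2))⁆,
      (⊤ : Subgroup (G ⧸ L2))⁆ = ⊥ := by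
    have : ⁅Subgroup.map π (Subgroup.lowerCentralSeries (⊤ : Subgroup G) i), (⊤ : Subgroup (G ⧸ L2))⁆
        = Subgroup.map π (Subgroup.lowerCentralSeries (⊤ : Subgroup G) (i + 1)) := by
      rw [show Subgroup.lowerCentralSeries (⊤ : Subgroup G) (i+1) = ⁅Subgroup.lowerCentralSeries (⊤ : Subgroup G) i, ⊤⁆ from rfl,
        Subgroup.map_commutator, Subgroup.map_top_of_surjective π hπ]
    rw [this]
    have : ⁅Subgroup.map π (Subgroup.lowerCentralSeries (⊤ : Subgroup G) (i+1)), (⊤ : Subgroup (G ⧸ L2))⁆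
        = Subgroup.map π (Subgroup.lowerCentralSeries (⊤ : Subgroup G) (i + 2)) := by
      rw [show Subgroup.lowerCentralSeries (⊤ : Subgroup G) (i+2) = ⁅Subgroup.lowerCentralSeries (⊤ : Subgroup G) (i+1), ⊤⁆ from rfl,
        Subgroup.map_commutator, Subgroup.map_top_of_surjective π hπ]
    rw [this]
    exact hmapbot _ le_rfl
  have key : ⁅⁅(⊤ : Subgroup (G ⧸ L2)), (⊤ : Subgroup (G ⧸ L2))⁆, Subgroup.map π (Subgroup.lowerCentralSeries (⊤ : Subgroup G) i)⁆ = ⊥ := by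
    apply Subgroup.commutator_commutator_eq_bot_of_rotate
    · rwa [Subgroup.commutator_comm (⊤ : Subgroup (G ⧸ L2))]
    · exact h1
  have himg : Subgroup.map π ⁅Subgroup.lowerCentralSeries (⊤ : Subgroup G) 1, Subgroup.lowerCentralSeries (⊤ : Subgroup G) i⁆ = ⊥ := by
    rw [Subgroup.map_commutator]
    have h1' : Subgroup.map π (Subgroup.lowerCentralSeries (⊤ : Subgroup G) 1) = ⁅(⊤ : Subgroup (G ⧸ L2)), (⊤ : Subgroup (G ⧸ L2))⁆ := by
      rw [show Subgroup.lowerCentralSeries (⊤ : Subgroup G) 1 = ⁅(⊤ : Subgroup G), ⊤⁆ from rfl,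
        Subgroup.map_commutator, Subgroup.map_top_of_surjective π hπ]
    rw [h1', key]
  rw [Subgroup.map_eq_bot_iff, hker] at himg
  exact himg

/-- If `e` induces the identity on the abelianization, it shifts the lower central series. -/
lemma graded_aux (e : G →* G) (he : ∀ x, e x * x⁻¹ ∈ Subgroup.lowerCentralSeries (⊤ : Subgroup G) 1) :
    ∀ i, ∀ x ∈ Subgroup.lowerCentralSeries (⊤ : Subgroup G) i, e x * x⁻¹ ∈ Subgroup.lowerCentralSeries (⊤ : Subgroup G) (i + 1) := by
  intro i
  induction i with
  | zero => intro x _; exact he x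
  | succ i ih =>
    have hnorm : (Subgroup.lowerCentralSeries (⊤ : Subgroup G) (i + 2)).Normal := Subgroup.lowerCentralSeries_normal ⊤ (i + 2)
    let K : Subgroup G :=
      { carrier := { x | x ∈ Subgroup.lowerCentralSeries (⊤ : Subgroup G) (i + 1) ∧
          e x * x⁻¹ ∈ Subgroup.lowerCentralSeries (⊤ : Subgroup G) (i + 2) }
        one_mem' := ⟨one_mem _, by simp only [map_one, inv_one, mul_one]; exact one_mem _⟩
        mul_mem' := by
          rintro x y ⟨hx1, hx2⟩ ⟨hy1, hy2⟩
          refine ⟨mul_mem hx1 hy1, ?_⟩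
          have : e (x * y) * (x * y)⁻¹ = (e x * x⁻¹) * (x * (e y * y⁻¹) * x⁻¹) := by
            rw [map_mul]; group
          rw [this]
          exact mul_mem hx2 (hnorm.conj_mem _ hy2 x)
        inv_mem' := by
          rintro x ⟨hx1, hx2⟩
          refine ⟨inv_mem hx1, ?_⟩
          have : e x⁻¹ * (x⁻¹)⁻¹ = x⁻¹ * (e x * x⁻¹)⁻¹ * (x⁻¹)⁻¹ := by
            rw [map_inv]; group
          rw [this]
          exact hnorm.conj_mem _ (inv_mem hx2) x⁻¹ }
    have hle : Subgroup.lowerCentralSeries (⊤ : Subgroup G) (i + 1) ≤ K := by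
      rw [show Subgroup.lowerCentralSeries (⊤ : Subgroup G) (i+1) = ⁅Subgroup.lowerCentralSeries (⊤ : Subgroup G) i, ⊤⁆ from rfl,
        Subgroup.commutator_le]
      intro p hp q _
      refine ⟨Subgroup.commutator_mem_commutator hp (Subgroup.mem_top q), ?_⟩
      -- notation
      set a := e p * p⁻¹ with ha_def
      set b := e q * q⁻¹ with hb_def
      set c := ⁅p, q⁆ with hc_def
      have ha : a ∈ Subgroup.lowerCentralSeries (⊤ : Subgroup G) (i + 1) := ih p hp
      have hb : b ∈ Subgroup.lowerCentralSeries (⊤ : Subgroup G) 1 := he q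
      have hc : c ∈ Subgroup.lowerCentralSeries (⊤ : Subgroup G) (i + 1) :=
        Subgroup.commutator_mem_commutator hp (Subgroup.mem_top q)
      have hpb : ⁅p, b⁆ ∈ Subgroup.lowerCentralSeries (⊤ : Subgroup G) (i + 2) := by
        have : ⁅b, p⁆ ∈ ⁅Subgroup.lowerCentralSeries (⊤ : Subgroup G) 1, Subgroup.lowerCentralSeries (⊤ : Subgroup G) i⁆ :=
          Subgroup.commutator_mem_commutator hb hp
        have h2 := commutator_lcs_one_le_aux (G := G) i this
        rw [← commutatorElement_inv]
        exact inv_mem h2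
      have hbc : ⁅b, c⁆ ∈ Subgroup.lowerCentralSeries (⊤ : Subgroup G) (i + 2) := by
        have : ⁅c, b⁆ ∈ ⁅Subgroup.lowerCentralSeries (⊤ : Subgroup G) (i + 1), ⊤⁆ :=
          Subgroup.commutator_mem_commutator hc (Subgroup.mem_top b)
        rw [← commutatorElement_inv]
        exact inv_mem this
      have hT : ⁅a, b * q⁆ ∈ Subgroup.lowerCentralSeries (⊤ : Subgroup G) (i + 2) :=
        Subgroup.commutator_mem_commutator ha (Subgroup.mem_top (b * q))
      have hac : ⁅a, c⁆ ∈ Subgroup.lowerCentralSeries (⊤ : Subgroup G) (i + 2) :=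
        Subgroup.commutator_mem_commutator ha (Subgroup.mem_top c)
      have hY : ⁅p, b⁆ * ⁅b, c⁆ ∈ Subgroup.lowerCentralSeries (⊤ : Subgroup G) (i + 2) := mul_mem hpb hbc
      have hident : e ⁅p, q⁆ * ⁅p, q⁆⁻¹ =
          (a * (⁅p, b⁆ * ⁅b, c⁆) * a⁻¹) * ⁅a, c⁆ * (c * ⁅a, b * q⁆ * c⁻¹) := by
        rw [map_commutatorElement]
        simp only [ha_def, hb_def, hc_def, commutatorElement_def]
        group
      rw [hident]
      exact mul_mem (mul_mem (hnorm.conj_mem _ hY a) hac) (hnorm.conj_mem _ hT c)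
    intro x hx
    exact (hle hx).2

/-- An endomorphism of a group with vanishing `s`-th lower central series that induces the
identity on the abelianization is bijective. -/
lemma bijective_aux {s : ℕ} (hbot : Subgroup.lowerCentralSeries (⊤ : Subgroup G) s = ⊥) (e : G →* G)
    (he : ∀ x, e x * x⁻¹ ∈ Subgroup.lowerCentralSeries (⊤ : Subgroup G) 1) : Function.Bijective e := by
  have graded := graded_aux e he
  constructor
  · intro x y hxy
    have h1 : e (x * y⁻¹) = 1 := by rw [map_mul, map_inv, hxy, mul_inv_cancel]
    have hmem : ∀ i, x * y⁻¹ ∈ Subgroup.lowerCentralSeries (⊤ : Subgroup G) i := by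
      intro i
      induction i with
      | zero => exact Subgroup.mem_top _
      | succ i ih =>
        have := graded i _ ih
        rw [h1, one_mul] at this
        exact (inv_mem_iff).mp this
    have := hmem s
    rw [hbot, Subgroup.mem_bot] at this
    exact mul_inv_eq_one.mp this
  · intro z
    have hstep : ∀ i, ∃ w y, y ∈ Subgroup.lowerCentralSeries (⊤ : Subgroup G) i ∧ z = e w * y := by
      intro i
      induction i with
      | zero => exact ⟨1, z, Subgroup.mem_top _, by simp⟩
      | succ i ih =>
        obtain ⟨w, y, hy, hz⟩ := ih
        refine ⟨w * y, (e y)⁻¹ * y, ?_, ?_⟩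
        · have hgr := graded i y hy
          have : (e y)⁻¹ * y = (y⁻¹ * (e y * y⁻¹) * y⁻¹⁻¹)⁻¹ := by group
          rw [this]
          exact inv_mem ((Subgroup.lowerCentralSeries_normal ⊤ (i + 1)).conj_mem _ hgr y⁻¹)
        · rw [hz, map_mul]; group
    obtain ⟨w, y, hy, hz⟩ := hstep s
    rw [hbot, Subgroup.mem_bot] at hy
    exact ⟨w, by rw [hz, hy, mul_one]⟩

end Aux

/-- The free nilpotent group of step size `s` and rank `r`: the quotient of the free
group on `r` generators by the `s`-th term of its lower central series. -/
abbrev FreeNilpotent (r s : ℕ) : Type :=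
  FreeGroup (Fin r) ⧸ Subgroup.lowerCentralSeries (⊤ : Subgroup (FreeGroup (Fin r))) s

section Main

variable {r s : ℕ}

/-- Any endomorphism of the abelianization of `FreeNilpotent r s` lifts to an endomorphism. -/
lemma exists_lift_aux (r s : ℕ)
    (φ : Abelianization (FreeNilpotent r s) →* Abelianization (FreeNilpotent r s)) :
    ∃ ψ : FreeNilpotent r s →* FreeNilpotent r s,
      ∀ x : FreeNilpotent r s, Abelianization.of (ψ x) = φ (Abelianization.of x) := by
  classical
  set F := FreeGroup (Fin r)
  set N := FreeNilpotent r s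
  let π : F →* N := QuotientGroup.mk' (Subgroup.lowerCentralSeries (⊤ : Subgroup F) s)
  have hπ : Function.Surjective π := QuotientGroup.mk'_surjective _
  have hofsurj : Function.Surjective (Abelianization.of : N → Abelianization N) := fun a =>
    Quotient.inductionOn a fun x => ⟨x, rfl⟩
  let sec : Abelianization N → N := Function.surjInv hofsurj
  have hsec : ∀ a, Abelianization.of (sec a) = a := Function.surjInv_eq hofsurj
  let f : F →* N := FreeGroup.lift fun i => sec (φ (Abelianization.of (π (FreeGroup.of i))))
  have hbotN : Subgroup.lowerCentralSeries (⊤ : Subgroup N) s = ⊥ := by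
    rw [← lcs_map_eq_aux π hπ s, Subgroup.map_eq_bot_iff, QuotientGroup.ker_mk']
  have hker : Subgroup.lowerCentralSeries (⊤ : Subgroup F) s ≤ f.ker := by
    intro x hx
    have : f x ∈ Subgroup.lowerCentralSeries (⊤ : Subgroup N) s :=
      Subgroup.lowerCentralSeries.map f s ⟨x, hx, rfl⟩
    rw [hbotN, Subgroup.mem_bot] at this
    exact this
  let ψ : N →* N := QuotientGroup.lift _ f hker
  refine ⟨ψ, ?_⟩
  have hhom : ((Abelianization.of).comp ψ).comp π = (φ.comp Abelianization.of).comp π := by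
    apply FreeGroup.ext_hom
    intro i
    show Abelianization.of (ψ (π (FreeGroup.of i))) = φ (Abelianization.of (π (FreeGroup.of i)))
    have : ψ (π (FreeGroup.of i)) = f (FreeGroup.of i) := rfl
    rw [this]
    have : f (FreeGroup.of i) = sec (φ (Abelianization.of (π (FreeGroup.of i)))) :=
      FreeGroup.lift_apply_of
    rw [this, hsec]
  intro x
  obtain ⟨y, rfl⟩ := hπ x
  exact DFunLike.congr_fun hhom y

/-- for `r, s ≥ 1`, every automorphism of the abelianization of the free
nilpotent group `N = F_r / ℓ_s(F_r)` lifts to an automorphism of `N`; that is, the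
homomorphism `Aut(N) → Aut(N/[N,N])` induced by the abelianization map is surjective. -/
theorem freeNilpotent_aut_to_aut_abelianization_surjective
    (r s : ℕ) (hr : 1 ≤ r) (hs : 1 ≤ s)
    (φ : Abelianization (FreeNilpotent r s) ≃* Abelianization (FreeNilpotent r s)) :
    ∃ ψ : FreeNilpotent r s ≃* FreeNilpotent r s,
      ∀ x : FreeNilpotent r s, Abelianization.of (ψ x) = φ (Abelianization.of x) := by
  obtain ⟨ψ₀, hψ₀⟩ := exists_lift_aux r s φ.toMonoidHom
  obtain ⟨ψ₁, hψ₁⟩ := exists_lift_aux r s φ.symm.toMonoidHom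
  set N := FreeNilpotent r s
  have hπ : Function.Surjective (QuotientGroup.mk' (Subgroup.lowerCentralSeries (⊤ : Subgroup (FreeGroup (Fin r))) s)) :=
    QuotientGroup.mk'_surjective _
  have hbotN : Subgroup.lowerCentralSeries (⊤ : Subgroup N) s = ⊥ := by
    rw [← lcs_map_eq_aux _ hπ s, Subgroup.map_eq_bot_iff, QuotientGroup.ker_mk']
  have hcomm : ∀ (g : N →* N), (∀ x, Abelianization.of (g x) = Abelianization.of x) →
      ∀ x, g x * x⁻¹ ∈ Subgroup.lowerCentralSeries (⊤ : Subgroup N) 1 := by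
    intro g hg x
    have h1 : Abelianization.of (g x * x⁻¹) = 1 := by
      rw [map_mul, map_inv, hg, mul_inv_cancel]
    rw [Subgroup.top_lowerCentralSeries_one]
    exact (QuotientGroup.eq_one_iff _).mp h1
  have he : ∀ x, Abelianization.of ((ψ₀.comp ψ₁) x) = Abelianization.of x := by
    intro x
    show Abelianization.of (ψ₀ (ψ₁ x)) = _
    rw [hψ₀, hψ₁]
    exact φ.apply_symm_apply _
  have he' : ∀ x, Abelianization.of ((ψ₁.comp ψ₀) x) = Abelianization.of x := by
    intro x
    show Abelianization.of (ψ₁ (ψ₀ x)) = _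
    rw [hψ₁, hψ₀]
    exact φ.symm_apply_apply _
  have hbij : Function.Bijective (ψ₀.comp ψ₁) :=
    bijective_aux hbotN _ (hcomm _ he)
  have hbij' : Function.Bijective (ψ₁.comp ψ₀) :=
    bijective_aux hbotN _ (hcomm _ he')
  have hψ₀bij : Function.Bijective ψ₀ := by
    constructor
    · intro x y hxy
      exact hbij'.injective (by simp [MonoidHom.comp_apply, hxy])
    · intro z
      obtain ⟨w, hw⟩ := hbij.surjective z
      exact ⟨ψ₁ w, hw⟩
  refine ⟨MulEquiv.ofBijective ψ₀ hψ₀bij, fun x => hψ₀ x⟩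
end Main
end
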